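/- Let n = 2N be even, q = exp(2πij/(6N)) with gcd(j,6N)=1, and ω = q^N (so ω^2 = ω - 1 and ω^3 = -1). Then ω^2·Σ_{k=1}^{N-1} q^k/(1-q^{6k}) + Σ_{k=1}^{N} q^{2k-1}/(1-q^{6k-3}) - Σ_{k=1}^{N} 1/(1-q^{3k-2}) = -(N/3)(1+ω) + 1/3 - ω/6. -/

import Mathlib

open Finset Complex Real

private lemma sum_Icc1 (M : ℕ) (g : ℕ → ℂ) : ∑ k ∈ Icc 1 M, g k = ∑ i ∈ range M, g (i+1) := by
  rw [← Finset.Ico_add_one_right_eq_Icc, Finset.sum_Ico_eq_sum_range]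
  simp [Nat.add_comm]

private lemma sum_reflectIcc (M : ℕ) (g : ℕ → ℂ) :
    ∑ k ∈ Icc 1 M, g (M+1-k) = ∑ k ∈ Icc 1 M, g k := by
  rw [sum_Icc1, sum_Icc1]
  rw [← Finset.sum_range_reflect]
  refine Finset.sum_congr rfl fun i hi => ?_
  simp only [Finset.mem_range] at hi
  congr 1
  omega

private lemma sum_blockIcc (a M : ℕ) (g : ℕ → ℂ) :
    ∑ k ∈ Icc 1 (a+M), g k = ∑ k ∈ Icc 1 a, g k + ∑ k ∈ Icc 1 M, g (a+k) := by
  rw [sum_Icc1, sum_Icc1, sum_Icc1, Finset.sum_range_add]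
  simp [Nat.add_assoc]

private lemma sum_range3 (n : ℕ) (g : ℕ → ℂ) :
    ∑ m ∈ range (3*n), g m = ∑ k ∈ range n, (g (3*k) + g (3*k+1) + g (3*k+2)) := by
  induction n with
  | zero => simp
  | succ n ih =>
    rw [show 3*(n+1) = 3*n+1+1+1 by ring, Finset.sum_range_succ, Finset.sum_range_succ,
      Finset.sum_range_succ, ih, Finset.sum_range_succ, show 3*n+1+1 = 3*n+2 by omega]
    ring

private lemma sum_range2 (n : ℕ) (g : ℕ → ℂ) :
    ∑ m ∈ range (2*n), g m = ∑ k ∈ range n, (g (2*k) + g (2*k+1)) := by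
  induction n with
  | zero => simp
  | succ n ih =>
    rw [show 2*(n+1) = 2*n+1+1 by ring, Finset.sum_range_succ, Finset.sum_range_succ, ih,
      Finset.sum_range_succ]
    ring

theorem even_case_lemma
    (N j : ℕ) (hN : 0 < N) (hj : Nat.gcd j (6 * N) = 1)
    (q : ℂ) (hq : q = Complex.exp (2 * Real.pi * Complex.I * j / (6 * N)))
    (ω : ℂ) (hω : ω = q ^ N) :
    ω ^ 2 * ∑ k ∈ Finset.Icc 1 (N - 1), q ^ k / (1 - q ^ (6 * k)) +
      ∑ k ∈ Finset.Icc 1 N, q ^ (2 * k - 1) / (1 - q ^ (6 * k - 3)) -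
      ∑ k ∈ Finset.Icc 1 N, 1 / (1 - q ^ (3 * k - 2)) =
      -((N : ℂ) / 3) * (1 + ω) + 1 / 3 - ω / 6 := by
  -- primitive root facts
  have hprim : IsPrimitiveRoot q (6*N) := by
    have h0 := Complex.isPrimitiveRoot_exp (6*N) (by omega)
    have hqq : q = (Complex.exp (2 * Real.pi * Complex.I / (6*N : ℕ)))^j := by
      rw [hq, ← Complex.exp_nat_mul]
      congr 1
      push_cast
      ring
    rw [hqq]
    exact h0.pow_of_coprime j hj
  have hq1 : q^(6*N) = 1 := hprim.pow_eq_one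
  have hqm : ∀ m : ℕ, 0 < m → m < 6*N → q^m ≠ 1 :=
    fun m h1 h2 => hprim.pow_ne_one_of_pos_of_lt h1.ne' h2
  have hq0 : q ≠ 0 := by
    intro h
    rw [h, zero_pow (by omega : 6*N ≠ 0)] at hq1
    exact zero_ne_one hq1
  have hq3N : q^(3*N) = -1 := by
    have hsq : (q^(3*N) - 1) * (q^(3*N) + 1) = 0 := by
      have h1 : (q^(3*N))^2 = 1 := by
        rw [← pow_mul, show 3*N*2 = 6*N by ring, hq1]
      linear_combination h1
    rcases mul_eq_zero.mp hsq with h | h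
    · exact absurd (sub_eq_zero.mp h) (hqm (3*N) (by omega) (by omega))
    · linear_combination h
  have hω3 : ω^3 = -1 := by
    rw [hω, ← pow_mul, show N*3 = 3*N by ring, hq3N]
  have hω2 : ω^2 = ω - 1 := by
    have h1 : (ω + 1) * (ω^2 - ω + 1) = 0 := by linear_combination hω3
    rcases mul_eq_zero.mp h1 with h | h
    · exfalso
      have hω1 : ω = -1 := by linear_combination h
      have h2N : q^(2*N) = 1 := by
        rw [show 2*N = N*2 by ring, pow_mul, ← hω, hω1]
        ring
      exact hqm (2*N) (by omega) (by omega) h2N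
    · linear_combination h
  have hden : ∀ m : ℕ, 0 < m → m < 6*N → (1:ℂ) - q^m ≠ 0 :=
    fun m h1 h2 => sub_ne_zero.mpr (Ne.symm (hqm m h1 h2))
  have hpair : ∀ a b : ℕ, 0 < a → a < 6*N → a + b = 6*N →
      1/(1-q^a) + 1/(1-q^b) = 1 := by
    intro a b ha1 ha2 hab
    have hda := hden a ha1 ha2
    have hdb := hden b (by omega) (by omega)
    have hmul : q^a * q^b = 1 := by rw [← pow_add, hab, hq1]
    field_simp
    linear_combination -hmul
  have hN1 : N - 1 + 1 = N := by omega
  have hNcast : ((N-1:ℕ):ℂ) = (N:ℂ)-1 := by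
    rw [Nat.cast_sub (by omega : 1 ≤ N), Nat.cast_one]
  have hq2N : q^(2*N) = ω^2 := by rw [hω, ← pow_mul]; congr 1; ring
  have hd2N : (1:ℂ) - ω^2 ≠ 0 := by rw [← hq2N]; exact hden _ (by omega) (by omega)
  -------------------------------------------------------------------
  -- E1
  -------------------------------------------------------------------
  have hA5 : ∑ k ∈ Icc 1 (N-1), q^(5*k)/(1-q^(6*k))
      = (ω-1) * ∑ k ∈ Icc 1 (N-1), q^k/(1-q^(6*k)) := by
    have hrefl := sum_reflectIcc (N-1) (fun t => q^(5*t)/(1-q^(6*t)))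
    rw [hN1] at hrefl
    rw [← hrefl, Finset.mul_sum]
    refine Finset.sum_congr rfl fun k hk => ?_
    simp only [Finset.mem_Icc] at hk
    have hd1 : (1:ℂ) - q^(6*(N-k)) ≠ 0 := hden _ (by omega) (by omega)
    have hd2 : (1:ℂ) - q^(6*k) ≠ 0 := hden _ (by omega) (by omega)
    rw [← mul_div_assoc, div_eq_div_iff hd1 hd2]
    have e1 : q^(5*(N-k)) * q^(6*k) = q^(5*N+k) := by rw [← pow_add]; congr 1; omega
    have e2 : q^(5*N+k) = -q^(2*N+k) := by
      rw [show 5*N+k = 3*N+(2*N+k) by ring, pow_add, hq3N]; ring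
    have e3 : (ω-1)*q^k = q^(2*N+k) := by
      rw [← hω2, hω, ← pow_mul, ← pow_add]; congr 1; ring
    have e4 : q^(2*N+k) * q^(6*(N-k)) = q^(8*N-5*k) := by rw [← pow_add]; congr 1; omega
    have e5 : q^(8*N-5*k) = -q^(5*(N-k)) := by
      rw [show 8*N-5*k = 3*N+(5*N-5*k) by omega, pow_add, hq3N,
        show 5*N-5*k = 5*(N-k) by omega]; ring
    calc q^(5*(N-k)) * (1-q^(6*k))
        = q^(5*(N-k)) - q^(5*(N-k))*q^(6*k) := by ring
      _ = q^(2*N+k) - q^(2*N+k)*q^(6*(N-k)) := by rw [e1, e2, e4, e5]; ring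
      _ = (ω-1)*q^k * (1-q^(6*(N-k))) := by rw [e3]; ring
  have hterm1 : ∀ k ∈ Icc 1 (N-1), q^k/(1-q^(6*k)) + q^(5*k)/(1-q^(6*k))
      = 1/(1-q^k) - 1/(1-q^(2*k)) - 1/(1-q^(3*k)) + 1/(1-q^(6*k)) := by
    intro k hk
    simp only [Finset.mem_Icc] at hk
    have h2 : q^(2*k) = (q^k)^2 := by rw [← pow_mul]; congr 1; ring
    have h3 : q^(3*k) = (q^k)^3 := by rw [← pow_mul]; congr 1; ring
    have h5 : q^(5*k) = (q^k)^5 := by rw [← pow_mul]; congr 1; ring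
    have h6 : q^(6*k) = (q^k)^6 := by rw [← pow_mul]; congr 1; ring
    have hd1 : (1:ℂ) - q^k ≠ 0 := hden _ (by omega) (by omega)
    have hd2 : (1:ℂ) - (q^k)^2 ≠ 0 := by rw [← h2]; exact hden _ (by omega) (by omega)
    have hd3 : (1:ℂ) - (q^k)^3 ≠ 0 := by rw [← h3]; exact hden _ (by omega) (by omega)
    have hd6 : (1:ℂ) - (q^k)^6 ≠ 0 := by rw [← h6]; exact hden _ (by omega) (by omega)
    rw [h2, h3, h5, h6]
    field_simp
    ring
  have hP1 : ∑ k ∈ Icc 1 (N-1), 1/(1-q^(6*k)) = ((N:ℂ)-1)/2 := by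
    have hr := sum_reflectIcc (N-1) (fun t => (1:ℂ)/(1-q^(6*t)))
    rw [hN1] at hr
    have h2 : ∀ k ∈ Icc 1 (N-1), (1:ℂ)/(1-q^(6*k)) + 1/(1-q^(6*(N-k))) = 1 := by
      intro k hk
      simp only [Finset.mem_Icc] at hk
      exact hpair (6*k) (6*(N-k)) (by omega) (by omega) (by omega)
    have h3 := Finset.sum_congr rfl h2
    rw [Finset.sum_add_distrib, hr, Finset.sum_const, Nat.card_Icc] at h3
    simp only [nsmul_eq_mul, mul_one, Nat.add_sub_cancel] at h3
    rw [hNcast] at h3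
    linear_combination h3/2
  have hE1 : ω * ∑ k ∈ Icc 1 (N-1), q^k/(1-q^(6*k))
      = ∑ k ∈ Icc 1 (N-1), 1/(1-q^k) - ∑ k ∈ Icc 1 (N-1), 1/(1-q^(2*k))
        - ∑ k ∈ Icc 1 (N-1), 1/(1-q^(3*k)) + ((N:ℂ)-1)/2 := by
    have hs := Finset.sum_congr rfl hterm1
    have hL : ∑ k ∈ Icc 1 (N-1), (q^k/(1-q^(6*k)) + q^(5*k)/(1-q^(6*k)))
        = ∑ k ∈ Icc 1 (N-1), q^k/(1-q^(6*k)) + ∑ k ∈ Icc 1 (N-1), q^(5*k)/(1-q^(6*k)) :=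
      Finset.sum_add_distrib
    have hsplit : ∑ k ∈ Icc 1 (N-1), (1/(1-q^k) - 1/(1-q^(2*k)) - 1/(1-q^(3*k)) + 1/(1-q^(6*k)))
        = ∑ k ∈ Icc 1 (N-1), 1/(1-q^k) - ∑ k ∈ Icc 1 (N-1), 1/(1-q^(2*k))
          - ∑ k ∈ Icc 1 (N-1), 1/(1-q^(3*k)) + ∑ k ∈ Icc 1 (N-1), 1/(1-q^(6*k)) := by
      rw [Finset.sum_add_distrib, Finset.sum_sub_distrib, Finset.sum_sub_distrib]
    linear_combination hs - hL + hsplit + hP1 - hA5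
  -------------------------------------------------------------------
  -- E2
  -------------------------------------------------------------------
  have hV : ∑ k ∈ Icc 1 N, q^(4*k-2)/(1-q^(6*k-3))
      = ω * ∑ k ∈ Icc 1 N, q^(2*k-1)/(1-q^(6*k-3)) := by
    have hrefl := sum_reflectIcc N (fun t => q^(2*t-1)/(1-q^(6*t-3)))
    rw [← hrefl, Finset.mul_sum]
    refine Finset.sum_congr rfl fun k hk => ?_
    simp only [Finset.mem_Icc] at hk
    have hd1 : (1:ℂ) - q^(6*k-3) ≠ 0 := hden _ (by omega) (by omega)
    have hd2 : (1:ℂ) - q^(6*(N+1-k)-3) ≠ 0 := hden _ (by omega) (by omega)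
    rw [← mul_div_assoc, div_eq_div_iff hd1 hd2]
    have e1 : q^(4*k-2) * q^(6*(N+1-k)-3) = q^(6*N+1-2*k) := by
      rw [← pow_add]; congr 1; omega
    have e2 : q^(6*N+1-2*k) = -q^(3*N+1-2*k) := by
      rw [show 6*N+1-2*k = 3*N+(3*N+1-2*k) by omega, pow_add, hq3N]; ring
    have e3 : ω * q^(2*(N+1-k)-1) = q^(3*N+1-2*k) := by
      rw [hω, ← pow_add]; congr 1; omega
    have e4 : q^(3*N+1-2*k) * q^(6*k-3) = q^(3*N+4*k-2) := by
      rw [← pow_add]; congr 1; omega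
    have e5 : q^(3*N+4*k-2) = -q^(4*k-2) := by
      rw [show 3*N+4*k-2 = 3*N+(4*k-2) by omega, pow_add, hq3N]; ring
    calc q^(4*k-2) * (1 - q^(6*(N+1-k)-3))
        = q^(4*k-2) - q^(4*k-2)*q^(6*(N+1-k)-3) := by ring
      _ = q^(3*N+1-2*k) - q^(3*N+1-2*k)*q^(6*k-3) := by rw [e1, e2, e4, e5]; ring
      _ = ω * q^(2*(N+1-k)-1) * (1 - q^(6*k-3)) := by rw [e3]; ring
  have hterm2 : ∀ k ∈ Icc 1 N, q^(2*k-1)/(1-q^(6*k-3)) + q^(4*k-2)/(1-q^(6*k-3))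
      = 1/(1-q^(2*k-1)) - 1/(1-q^(6*k-3)) := by
    intro k hk
    simp only [Finset.mem_Icc] at hk
    have h2 : q^(4*k-2) = (q^(2*k-1))^2 := by rw [← pow_mul]; congr 1; omega
    have h3 : q^(6*k-3) = (q^(2*k-1))^3 := by rw [← pow_mul]; congr 1; omega
    have hd1 : (1:ℂ) - q^(2*k-1) ≠ 0 := hden _ (by omega) (by omega)
    have hd3 : (1:ℂ) - (q^(2*k-1))^3 ≠ 0 := by rw [← h3]; exact hden _ (by omega) (by omega)
    rw [h2, h3]
    field_simp
    ring
  have hP2 : ∑ k ∈ Icc 1 N, 1/(1-q^(6*k-3)) = (N:ℂ)/2 := by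
    have hr := sum_reflectIcc N (fun t => (1:ℂ)/(1-q^(6*t-3)))
    have h2 : ∀ k ∈ Icc 1 N, (1:ℂ)/(1-q^(6*k-3)) + 1/(1-q^(6*(N+1-k)-3)) = 1 := by
      intro k hk
      simp only [Finset.mem_Icc] at hk
      exact hpair (6*k-3) (6*(N+1-k)-3) (by omega) (by omega) (by omega)
    have h3 := Finset.sum_congr rfl h2
    rw [Finset.sum_add_distrib, hr, Finset.sum_const, Nat.card_Icc] at h3
    simp only [nsmul_eq_mul, mul_one, Nat.add_sub_cancel] at h3
    linear_combination h3/2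
  have hE2 : ∑ k ∈ Icc 1 N, q^(2*k-1)/(1-q^(6*k-3))
      = (2-ω)/3 * ∑ k ∈ Icc 1 N, 1/(1-q^(2*k-1)) - (N:ℂ)*(2-ω)/6 := by
    have hs := Finset.sum_congr rfl hterm2
    have hL : ∑ k ∈ Icc 1 N, (q^(2*k-1)/(1-q^(6*k-3)) + q^(4*k-2)/(1-q^(6*k-3)))
        = ∑ k ∈ Icc 1 N, q^(2*k-1)/(1-q^(6*k-3)) + ∑ k ∈ Icc 1 N, q^(4*k-2)/(1-q^(6*k-3)) :=
      Finset.sum_add_distrib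
    have hR : ∑ k ∈ Icc 1 N, (1/(1-q^(2*k-1)) - 1/(1-q^(6*k-3)))
        = ∑ k ∈ Icc 1 N, 1/(1-q^(2*k-1)) - ∑ k ∈ Icc 1 N, 1/(1-q^(6*k-3)) :=
      Finset.sum_sub_distrib _ _
    linear_combination (2-ω)/3*(hs - hL + hR - hP2 - hV)
      + (∑ k ∈ Icc 1 N, q^(2*k-1)/(1-q^(6*k-3)))/3 * hω2
  -------------------------------------------------------------------
  -- master sum and E3
  -------------------------------------------------------------------
  have hM : ∑ k ∈ Icc 1 (2*N), 1/(1-q^(3*k-2)) = 2*(N:ℂ)*(1+ω)/3 := by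
    have hstep : ∀ k ∈ Icc 1 (2*N), (1:ℂ)/(1-q^(3*k-2))
        = (∑ m ∈ range (2*N), (q^(3*k-2))^m) / (1-ω^2) := by
      intro k hk
      simp only [Finset.mem_Icc] at hk
      have hdx : (1:ℂ) - q^(3*k-2) ≠ 0 := hden _ (by omega) (by omega)
      have hxp : (q^(3*k-2))^(2*N) = ω^2 := by
        obtain ⟨k', rfl⟩ : ∃ k', k = k'+1 := ⟨k-1, by omega⟩
        have h1 : (q^(3*(k'+1)-2))^(2*N) * q^(4*N) = 1 := by
          rw [← pow_mul, ← pow_add, show (3*(k'+1)-2)*(2*N)+4*N = 6*N*(k'+1) by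
            rw [show 3*(k'+1)-2 = 3*k'+1 by omega]; ring]
          rw [pow_mul, hq1, one_pow]
        have h2 : ω^2 * q^(4*N) = 1 := by
          rw [← hq2N, ← pow_add, show 2*N+4*N = 6*N by ring, hq1]
        exact mul_right_cancel₀ (pow_ne_zero _ hq0) (h1.trans h2.symm)
      rw [div_eq_div_iff hdx hd2N]
      have hgeo := geom_sum_mul (q^(3*k-2)) (2*N)
      linear_combination hgeo + hxp
    rw [Finset.sum_congr rfl hstep, ← Finset.sum_div, Finset.sum_comm]
    have hin : ∀ m ∈ range (2*N), ∑ k ∈ Icc 1 (2*N), ((q^(3*k-2))^m : ℂ)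
        = if m = 0 then (2*(N:ℂ)) else 0 := by
      intro m hm
      simp only [Finset.mem_range] at hm
      by_cases h0 : m = 0
      · subst h0
        simp [Finset.sum_const, Nat.card_Icc]
      · have hy : q^(3*m) ≠ 1 := hqm _ (by omega) (by omega)
        have hyp : (q^(3*m))^(2*N) = 1 := by
          rw [← pow_mul, show 3*m*(2*N) = 6*N*m by ring, pow_mul, hq1, one_pow]
        have hsk : ∑ k ∈ Icc 1 (2*N), (q^(3*m))^k = 0 := by
          rw [sum_Icc1 (2*N) (fun t => (q^(3*m))^t)]
          have hss : ∀ i ∈ range (2*N), (q^(3*m))^(i+1) = (q^(3*m))^i * q^(3*m) :=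
            fun i _ => pow_succ _ _
          rw [Finset.sum_congr rfl hss, ← Finset.sum_mul, geom_sum_eq hy, hyp]
          simp
        have hrel : ∀ k ∈ Icc 1 (2*N), ((q^(3*k-2))^m : ℂ) * (q^m)^2 = (q^(3*m))^k := by
          intro k hk
          simp only [Finset.mem_Icc] at hk
          obtain ⟨k', rfl⟩ : ∃ k', k = k'+1 := ⟨k-1, by omega⟩
          rw [← pow_mul, ← pow_mul, ← pow_mul, ← pow_add]
          congr 1
          rw [show 3*(k'+1)-2 = 3*k'+1 by omega]; ring
        have hz : (∑ k ∈ Icc 1 (2*N), ((q^(3*k-2))^m : ℂ)) * (q^m)^2 = 0 := by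
          rw [Finset.sum_mul, Finset.sum_congr rfl hrel, hsk]
        simp only [if_neg h0]
        rcases mul_eq_zero.mp hz with h | h
        · exact h
        · exact absurd h (pow_ne_zero _ (pow_ne_zero _ hq0))
    rw [Finset.sum_congr rfl hin, Finset.sum_ite_eq' (range (2*N)) 0 (fun _ => 2*(N:ℂ))]
    rw [if_pos (by simp [Finset.mem_range]; omega)]
    rw [div_eq_iff hd2N]
    linear_combination (2*(N:ℂ)/3)*hω2 + (2*(N:ℂ)/3)*hω3
  have hsplitM : ∑ k ∈ Icc 1 (2*N), 1/(1-q^(3*k-2))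
      = ∑ k ∈ Icc 1 N, 1/(1-q^(3*k-2)) + ∑ k ∈ Icc 1 N, 1/(1-q^(3*(N+k)-2)) := by
    rw [show 2*N = N+N by ring]
    exact sum_blockIcc N N (fun t => 1/(1-q^(3*t-2)))
  have hupper : ∀ k ∈ Icc 1 N, (1:ℂ)/(1-q^(3*(N+k)-2)) = 1 - 1/(1-q^(3*(N+1-k)-1)) := by
    intro k hk
    simp only [Finset.mem_Icc] at hk
    have h := hpair (3*(N+k)-2) (3*(N+1-k)-1) (by omega) (by omega) (by omega)
    linear_combination h
  have hTrefl : ∑ k ∈ Icc 1 N, (1:ℂ)/(1-q^(3*(N+1-k)-1)) = ∑ k ∈ Icc 1 N, 1/(1-q^(3*k-1)) :=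
    sum_reflectIcc N (fun t => 1/(1-q^(3*t-1)))
  have hE3 : ∑ k ∈ Icc 1 N, 1/(1-q^(3*k-2)) - ∑ k ∈ Icc 1 N, 1/(1-q^(3*k-1))
      = 2*(N:ℂ)*(1+ω)/3 - (N:ℂ) := by
    have hu := Finset.sum_congr rfl hupper
    rw [Finset.sum_sub_distrib, hTrefl, Finset.sum_const, Nat.card_Icc] at hu
    simp only [nsmul_eq_mul, mul_one, Nat.add_sub_cancel] at hu
    linear_combination hM - hsplitM - hu
  -------------------------------------------------------------------
  -- block decompositions (used by E4 and E7)
  -------------------------------------------------------------------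
  have hfN : (1:ℂ)/(1-q^N) = ω := by
    have hdω : (1:ℂ) - q^N ≠ 0 := hden _ (by omega) (by omega)
    rw [div_eq_iff hdω, ← hω]
    linear_combination hω2
  have hf2N : (1:ℂ)/(1-q^(2*N)) = (1+ω)/3 := by
    rw [hq2N, div_eq_div_iff hd2N (by norm_num : (3:ℂ) ≠ 0)]
    linear_combination hω2 + hω3
  have b0 : ∑ i ∈ range N, (1:ℂ)/(1-q^i) = ∑ k ∈ Icc 1 (N-1), 1/(1-q^k) := by
    have h0 := Finset.sum_range_succ' (fun i => (1:ℂ)/(1-q^i)) (N-1)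
    rw [hN1] at h0
    rw [h0, sum_Icc1 (N-1) (fun t => (1:ℂ)/(1-q^t))]
    simp
  have b1 : ∑ i ∈ range N, (1:ℂ)/(1-q^(N+i)) = ω + ∑ k ∈ Icc 1 (N-1), 1/(1-q^(N+k)) := by
    have h0 := Finset.sum_range_succ' (fun i => (1:ℂ)/(1-q^(N+i))) (N-1)
    rw [hN1] at h0
    rw [h0, sum_Icc1 (N-1) (fun t => (1:ℂ)/(1-q^(N+t)))]
    simp only [Nat.add_zero]
    rw [hfN]
    ring
  have b2 : ∑ i ∈ range N, (1:ℂ)/(1-q^(N+(N+i)))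
      = (1+ω)/3 + ∑ k ∈ Icc 1 (N-1), 1/(1-q^(2*N+k)) := by
    have hcg : ∑ i ∈ range N, (1:ℂ)/(1-q^(N+(N+i))) = ∑ i ∈ range N, (1:ℂ)/(1-q^(2*N+i)) := by
      refine Finset.sum_congr rfl fun i _ => ?_
      have : N+(N+i) = 2*N+i := by omega
      rw [this]
    rw [hcg]
    have h0 := Finset.sum_range_succ' (fun i => (1:ℂ)/(1-q^(2*N+i))) (N-1)
    rw [hN1] at h0
    rw [h0, sum_Icc1 (N-1) (fun t => (1:ℂ)/(1-q^(2*N+t)))]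
    simp only [Nat.add_zero]
    rw [hf2N]
    ring
  -------------------------------------------------------------------
  -- E4
  -------------------------------------------------------------------
  have hA4 : ∑ m ∈ range (3*N), (1:ℂ)/(1-q^m)
      = ∑ k ∈ Icc 1 N, 1/(1-q^(3*k-2)) + ∑ k ∈ Icc 1 N, 1/(1-q^(3*k-1))
        + ∑ k ∈ Icc 1 (N-1), 1/(1-q^(3*k)) := by
    have p0 : ∑ k ∈ range N, (1:ℂ)/(1-q^(3*k)) = ∑ k ∈ Icc 1 (N-1), 1/(1-q^(3*k)) := by
      have h0 := Finset.sum_range_succ' (fun i => (1:ℂ)/(1-q^(3*i))) (N-1)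
      rw [hN1] at h0
      rw [h0, sum_Icc1 (N-1) (fun t => (1:ℂ)/(1-q^(3*t)))]
      simp
    have p1 : ∑ k ∈ range N, (1:ℂ)/(1-q^(3*k+1)) = ∑ k ∈ Icc 1 N, 1/(1-q^(3*k-2)) := by
      rw [sum_Icc1 N (fun t => (1:ℂ)/(1-q^(3*t-2)))]
      refine Finset.sum_congr rfl fun i _ => ?_
      have : 3*(i+1)-2 = 3*i+1 := by omega
      rw [this]
    have p2 : ∑ k ∈ range N, (1:ℂ)/(1-q^(3*k+2)) = ∑ k ∈ Icc 1 N, 1/(1-q^(3*k-1)) := by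
      rw [sum_Icc1 N (fun t => (1:ℂ)/(1-q^(3*t-1)))]
      refine Finset.sum_congr rfl fun i _ => ?_
      have : 3*(i+1)-1 = 3*i+2 := by omega
      rw [this]
    rw [sum_range3 N (fun m => (1:ℂ)/(1-q^m)), Finset.sum_add_distrib, Finset.sum_add_distrib,
      p0, p1, p2]
    ring
  have hB4 : ∑ m ∈ range (3*N), (1:ℂ)/(1-q^m)
      = ∑ k ∈ Icc 1 (N-1), 1/(1-q^k) + ω + ∑ k ∈ Icc 1 (N-1), 1/(1-q^(N+k))
        + (1+ω)/3 + ∑ k ∈ Icc 1 (N-1), 1/(1-q^(2*N+k)) := by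
    rw [show 3*N = N+(N+N) by ring, Finset.sum_range_add, Finset.sum_range_add, b0, b1, b2]
    ring
  have hE4 : ∑ k ∈ Icc 1 N, 1/(1-q^(3*k-2)) + ∑ k ∈ Icc 1 N, 1/(1-q^(3*k-1))
        + ∑ k ∈ Icc 1 (N-1), 1/(1-q^(3*k))
      = ∑ k ∈ Icc 1 (N-1), 1/(1-q^k) + ω + ∑ k ∈ Icc 1 (N-1), 1/(1-q^(N+k))
        + (1+ω)/3 + ∑ k ∈ Icc 1 (N-1), 1/(1-q^(2*N+k)) := by
    linear_combination hB4 - hA4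
  -------------------------------------------------------------------
  -- E5
  -------------------------------------------------------------------
  have hterm5 : ∀ k ∈ Icc 1 (N-1), (1:ℂ)/(1-q^k) + 1/(1-q^(3*N+k)) = 2*(1/(1-q^(2*k))) := by
    intro k hk
    simp only [Finset.mem_Icc] at hk
    have hrw : q^(3*N+k) = -q^k := by rw [pow_add, hq3N]; ring
    have h2 : q^(2*k) = (q^k)^2 := by rw [← pow_mul]; congr 1; ring
    have hd1 : (1:ℂ) - q^k ≠ 0 := hden _ (by omega) (by omega)
    have hd3 : (1:ℂ) + q^k ≠ 0 := by
      have h := hden (3*N+k) (by omega) (by omega)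
      rwa [hrw, sub_neg_eq_add] at h
    have hd2 : (1:ℂ) - (q^k)^2 ≠ 0 := by rw [← h2]; exact hden _ (by omega) (by omega)
    rw [hrw, h2, sub_neg_eq_add]
    field_simp
    ring
  have hupper5 : ∀ k ∈ Icc 1 (N-1), (1:ℂ)/(1-q^(3*N+k)) = 1 - 1/(1-q^(2*N+(N-k))) := by
    intro k hk
    simp only [Finset.mem_Icc] at hk
    have h := hpair (3*N+k) (2*N+(N-k)) (by omega) (by omega) (by omega)
    linear_combination h
  have hV3r : ∑ k ∈ Icc 1 (N-1), (1:ℂ)/(1-q^(2*N+(N-k)))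
      = ∑ k ∈ Icc 1 (N-1), 1/(1-q^(2*N+k)) := by
    have hr := sum_reflectIcc (N-1) (fun t => (1:ℂ)/(1-q^(2*N+t)))
    rw [hN1] at hr
    exact hr
  have hE5 : ∑ k ∈ Icc 1 (N-1), 1/(1-q^k) + ((N:ℂ)-1) - ∑ k ∈ Icc 1 (N-1), 1/(1-q^(2*N+k))
      = 2*∑ k ∈ Icc 1 (N-1), 1/(1-q^(2*k)) := by
    have hs := Finset.sum_congr rfl hterm5
    have hL : ∑ k ∈ Icc 1 (N-1), ((1:ℂ)/(1-q^k) + 1/(1-q^(3*N+k)))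
        = ∑ k ∈ Icc 1 (N-1), (1:ℂ)/(1-q^k) + ∑ k ∈ Icc 1 (N-1), 1/(1-q^(3*N+k)) :=
      Finset.sum_add_distrib
    have hu := Finset.sum_congr rfl hupper5
    rw [Finset.sum_sub_distrib, hV3r, Finset.sum_const, Nat.card_Icc] at hu
    simp only [nsmul_eq_mul, mul_one, Nat.add_sub_cancel] at hu
    rw [hNcast] at hu
    have hR : ∑ k ∈ Icc 1 (N-1), 2*((1:ℂ)/(1-q^(2*k)))
        = 2*∑ k ∈ Icc 1 (N-1), (1:ℂ)/(1-q^(2*k)) := by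
      rw [Finset.mul_sum]
    linear_combination hs - hL + hR - hu
  -------------------------------------------------------------------
  -- E6
  -------------------------------------------------------------------
  have hterm6 : ∀ k ∈ Icc 1 (N-1),
      (1:ℂ)/(1-q^k) + 1/(1-q^(2*N+k)) + 1/(1-q^(4*N+k)) = 3*(1/(1-q^(3*k))) := by
    intro k hk
    simp only [Finset.mem_Icc] at hk
    have h22 : q^(2*N+k) = (ω-1)*q^k := by
      rw [← hω2, hω, ← pow_mul, ← pow_add]; congr 1; ring
    have h24 : q^(4*N+k) = -(ω*q^k) := by
      rw [show 4*N+k = 3*N+(N+k) by ring, pow_add, hq3N, hω, ← pow_add]; ring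
    have h3 : q^(3*k) = (q^k)^3 := by rw [← pow_mul]; congr 1; ring
    have hd1 : (1:ℂ) - q^k ≠ 0 := hden _ (by omega) (by omega)
    have hd2 : (1:ℂ) - (ω-1)*q^k ≠ 0 := by rw [← h22]; exact hden _ (by omega) (by omega)
    have hd3 : (1:ℂ) + ω*q^k ≠ 0 := by
      have h := hden (4*N+k) (by omega) (by omega)
      rwa [h24, sub_neg_eq_add] at h
    have hd4 : (1:ℂ) - (q^k)^3 ≠ 0 := by rw [← h3]; exact hden _ (by omega) (by omega)
    rw [h22, h24, h3, sub_neg_eq_add]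
    have key1 : (1-q^k)*(1-(ω-1)*q^k)*(1+ω*q^k) = 1-(q^k)^3 := by
      linear_combination ((q^k)^3 - (q^k)^2) * hω2
    have key2 : (1-(ω-1)*q^k)*(1+ω*q^k) + (1-q^k)*(1+ω*q^k) + (1-q^k)*(1-(ω-1)*q^k)
        = 3 := by
      linear_combination (-(q^k)^2) * hω2
    calc (1:ℂ)/(1-q^k) + 1/(1-(ω-1)*q^k) + 1/(1+ω*q^k)
        = ((1-(ω-1)*q^k)*(1+ω*q^k) + (1-q^k)*(1+ω*q^k) + (1-q^k)*(1-(ω-1)*q^k))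
          / ((1-q^k)*(1-(ω-1)*q^k)*(1+ω*q^k)) := by
          rw [div_add_div _ _ hd1 hd2, div_add_div _ _ (mul_ne_zero hd1 hd2) hd3]
          congr 1
          ring
      _ = 3/(1-(q^k)^3) := by rw [key1, key2]
      _ = 3*(1/(1-(q^k)^3)) := by ring
  have hupper6 : ∀ k ∈ Icc 1 (N-1), (1:ℂ)/(1-q^(4*N+k)) = 1 - 1/(1-q^(N+(N-k))) := by
    intro k hk
    simp only [Finset.mem_Icc] at hk
    have h := hpair (4*N+k) (N+(N-k)) (by omega) (by omega) (by omega)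
    linear_combination h
  have hV2r : ∑ k ∈ Icc 1 (N-1), (1:ℂ)/(1-q^(N+(N-k)))
      = ∑ k ∈ Icc 1 (N-1), 1/(1-q^(N+k)) := by
    have hr := sum_reflectIcc (N-1) (fun t => (1:ℂ)/(1-q^(N+t)))
    rw [hN1] at hr
    exact hr
  have hE6 : ∑ k ∈ Icc 1 (N-1), 1/(1-q^k) + ∑ k ∈ Icc 1 (N-1), 1/(1-q^(2*N+k)) + ((N:ℂ)-1)
      - ∑ k ∈ Icc 1 (N-1), 1/(1-q^(N+k)) = 3*∑ k ∈ Icc 1 (N-1), 1/(1-q^(3*k)) := by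
    have hs := Finset.sum_congr rfl hterm6
    have hL : ∑ k ∈ Icc 1 (N-1), ((1:ℂ)/(1-q^k) + 1/(1-q^(2*N+k)) + 1/(1-q^(4*N+k)))
        = ∑ k ∈ Icc 1 (N-1), (1:ℂ)/(1-q^k) + ∑ k ∈ Icc 1 (N-1), 1/(1-q^(2*N+k))
          + ∑ k ∈ Icc 1 (N-1), 1/(1-q^(4*N+k)) := by
      rw [Finset.sum_add_distrib, Finset.sum_add_distrib]
    have hu := Finset.sum_congr rfl hupper6
    rw [Finset.sum_sub_distrib, hV2r, Finset.sum_const, Nat.card_Icc] at hu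
    simp only [nsmul_eq_mul, mul_one, Nat.add_sub_cancel] at hu
    rw [hNcast] at hu
    have hR : ∑ k ∈ Icc 1 (N-1), 3*((1:ℂ)/(1-q^(3*k)))
        = 3*∑ k ∈ Icc 1 (N-1), (1:ℂ)/(1-q^(3*k)) := by
      rw [Finset.mul_sum]
    linear_combination hs - hL + hR - hu
  -------------------------------------------------------------------
  -- E7
  -------------------------------------------------------------------
  have hA7 : ∑ m ∈ range (2*N), (1:ℂ)/(1-q^m)
      = ∑ k ∈ Icc 1 (N-1), 1/(1-q^(2*k)) + ∑ k ∈ Icc 1 N, 1/(1-q^(2*k-1)) := by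
    have p0 : ∑ k ∈ range N, (1:ℂ)/(1-q^(2*k)) = ∑ k ∈ Icc 1 (N-1), 1/(1-q^(2*k)) := by
      have h0 := Finset.sum_range_succ' (fun i => (1:ℂ)/(1-q^(2*i))) (N-1)
      rw [hN1] at h0
      rw [h0, sum_Icc1 (N-1) (fun t => (1:ℂ)/(1-q^(2*t)))]
      simp
    have p1 : ∑ k ∈ range N, (1:ℂ)/(1-q^(2*k+1)) = ∑ k ∈ Icc 1 N, 1/(1-q^(2*k-1)) := by
      rw [sum_Icc1 N (fun t => (1:ℂ)/(1-q^(2*t-1)))]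
      refine Finset.sum_congr rfl fun i _ => ?_
      have : 2*(i+1)-1 = 2*i+1 := by omega
      rw [this]
    rw [sum_range2 N (fun m => (1:ℂ)/(1-q^m)), Finset.sum_add_distrib, p0, p1]
  have hB7 : ∑ m ∈ range (2*N), (1:ℂ)/(1-q^m)
      = ∑ k ∈ Icc 1 (N-1), 1/(1-q^k) + ω + ∑ k ∈ Icc 1 (N-1), 1/(1-q^(N+k)) := by
    rw [show 2*N = N+N by ring, Finset.sum_range_add, b0, b1]
    ring
  have hE7 : ∑ k ∈ Icc 1 N, 1/(1-q^(2*k-1)) + ∑ k ∈ Icc 1 (N-1), 1/(1-q^(2*k))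
      = ∑ k ∈ Icc 1 (N-1), 1/(1-q^k) + ω + ∑ k ∈ Icc 1 (N-1), 1/(1-q^(N+k)) := by
    linear_combination hB7 - hA7
  -------------------------------------------------------------------
  -- final assembly
  -------------------------------------------------------------------
  linear_combination ω*hE1 + hE2 - hE3/2 - hE4/2 + (1+ω)/3*hE5 + (2*ω-1)/6*hE6
    + (2-ω)/3*hE7 - hω2/3
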